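/- Let n ∈ ℕ, let H be a complex inner product space with dim H = 2^n, and let W_1, …, W_N be linear subspaces of H that are pairwise orthogonal (every vector of W_i is orthogonal to every vector of W_j for i ≠ j) and satisfy dim W_i ≥ 1 for every i. Define ℓ_i := n + 1 − ⌈log₂(dim W_i)⌉ for each i. Then ℓ_i ≥ 1 for every i and ∑_{i=1}^N 2^{−ℓ_i} ≤ 1. -/

import Mathlib

lemma kraft_aux_pow_clog_le (d : ℕ) (hd : 1 ≤ d) : 2 ^ Nat.clog 2 d ≤ 2 * d := by
  rcases eq_or_lt_of_le hd with h | h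
  · simp [← h]
  · have h1 : 2 ^ (Nat.clog 2 d - 1) < d := Nat.pow_pred_clog_lt_self one_lt_two h
    have h2 : 1 ≤ Nat.clog 2 d := Nat.one_le_iff_ne_zero.mpr (by
      simpa using (Nat.clog_pos one_lt_two h).ne')
    calc 2 ^ Nat.clog 2 d = 2 * 2 ^ (Nat.clog 2 d - 1) := by
          rw [← pow_succ']
          congr 1
          omega
      _ ≤ 2 * d := by omega

theorem kraft_inequality_for_halting_spaces
    {H : Type*} [NormedAddCommGroup H] [InnerProductSpace ℂ H] [FiniteDimensional ℂ H]
    (n : ℕ) (hdim : Module.finrank ℂ H = 2 ^ n)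
    (N : ℕ) (W : Fin N → Submodule ℂ H)
    (horth : ∀ i j, i ≠ j → ∀ v ∈ W i, ∀ w ∈ W j, (inner ℂ v w : ℂ) = 0)
    (hpos : ∀ i, 1 ≤ Module.finrank ℂ (W i)) :
    (∀ i, 1 ≤ n + 1 - Nat.clog 2 (Module.finrank ℂ (W i))) ∧
    ∑ i : Fin N, ((1 : ℝ) / 2) ^ (n + 1 - Nat.clog 2 (Module.finrank ℂ (W i))) ≤ 1 := by
  classical
  set d : Fin N → ℕ := fun i => Module.finrank ℂ (W i) with hd
  -- each dimension is at most 2 ^ n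
  have hle : ∀ i, d i ≤ 2 ^ n := fun i => hdim ▸ Submodule.finrank_le (W i)
  have hclog : ∀ i, Nat.clog 2 (d i) ≤ n := fun i =>
    (Nat.clog_le_iff_le_pow one_lt_two).mpr (hle i)
  have hℓ : ∀ i, 1 ≤ n + 1 - Nat.clog 2 (d i) := fun i => by
    have := hclog i; omega
  refine ⟨hℓ, ?_⟩
  -- orthogonality gives independence
  have hofam : OrthogonalFamily ℂ (fun i => W i) fun i => (W i).subtypeₗᵢ := by
    intro i j hij v w
    exact horth i j hij v v.2 w w.2
  have hindep : iSupIndep W := hofam.independent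
  -- sum of dimensions is at most dim H
  have hsum : ∑ i, d i ≤ 2 ^ n := by
    rw [← hdim]
    have hinj : Function.Injective
        (DFinsupp.lsum ℕ fun i => (W i).subtype) := hindep.dfinsupp_lsum_injective
    have h := LinearMap.finrank_le_finrank_of_injective hinj
    have heq : Module.finrank ℂ (Π₀ (i : Fin N), ↥(W i)) = ∑ i, d i :=
      Module.finrank_directSum (R := ℂ) (fun i => ↥(W i))
    rw [heq] at h
    exact h
  -- pointwise bound : (1/2)^ℓ i ≤ d i / 2^n
  have key : ∀ i, ((1 : ℝ) / 2) ^ (n + 1 - Nat.clog 2 (d i)) ≤ (d i : ℝ) / 2 ^ n := by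
    intro i
    have hnat : 2 ^ n ≤ d i * 2 ^ (n + 1 - Nat.clog 2 (d i)) := by
      have h1 : 2 ^ Nat.clog 2 (d i) ≤ 2 * d i := kraft_aux_pow_clog_le _ (hpos i)
      have h2 : Nat.clog 2 (d i) ≤ n := hclog i
      have h3 : (n + 1 - Nat.clog 2 (d i)) + Nat.clog 2 (d i) = n + 1 := by omega
      have h4 : 2 ^ n * 2 ^ Nat.clog 2 (d i) ≤
          (d i * 2 ^ (n + 1 - Nat.clog 2 (d i))) * 2 ^ Nat.clog 2 (d i) := by
        calc 2 ^ n * 2 ^ Nat.clog 2 (d i) ≤ 2 ^ n * (2 * d i) :=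
              Nat.mul_le_mul_left _ h1
          _ = d i * 2 ^ (n + 1) := by ring
          _ = (d i * 2 ^ (n + 1 - Nat.clog 2 (d i))) * 2 ^ Nat.clog 2 (d i) := by
              rw [mul_assoc, ← pow_add, h3]
      exact Nat.le_of_mul_le_mul_right h4 (Nat.pow_pos two_pos)
    have hnatR : (2 : ℝ) ^ n ≤ (d i : ℝ) * 2 ^ (n + 1 - Nat.clog 2 (d i)) := by
      exact_mod_cast hnat
    rw [div_pow, one_pow, div_le_div_iff₀ (by positivity) (by positivity)]
    linarith
  calc ∑ i : Fin N, ((1 : ℝ) / 2) ^ (n + 1 - Nat.clog 2 (d i))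
      ≤ ∑ i : Fin N, (d i : ℝ) / 2 ^ n := Finset.sum_le_sum fun i _ => key i
    _ = (∑ i, (d i : ℕ) : ℝ) / 2 ^ n := by rw [← Finset.sum_div]
    _ ≤ 1 := by
        rw [div_le_one (by positivity)]
        exact_mod_cast hsum
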